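/- Let a > 0 and let p, q be points of the Euclidean plane with dist(p, q) = r, where 0 ≤ r ≤ 2a. Then the Lebesgue measure (area) of the union of the two closed disks of radius a centered at p and q equals 2π·a² − 2a²·arccos(r/(2a)) + r·√(a² − r²/4). -/

import Mathlib

open Real MeasureTheory

lemma ftc_sqrt (a d : ℝ) (ha : 0 < a) (hd0 : 0 ≤ d) (hda : d ≤ a) :
    ∫ x in d..a, 2 * Real.sqrt (a^2 - x^2)
      = a^2 * (π/2 - Real.arcsin (d/a)) - d * Real.sqrt (a^2 - d^2) := by
  have key : ∫ x in d..a, 2 * Real.sqrt (a^2 - x^2)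
      = (fun y : ℝ => y * Real.sqrt (a^2 - y^2) + a^2 * Real.arcsin (y/a)) a
        - (fun y : ℝ => y * Real.sqrt (a^2 - y^2) + a^2 * Real.arcsin (y/a)) d := by
    apply intervalIntegral.integral_eq_sub_of_hasDeriv_right_of_le hda
      (f := fun y : ℝ => y * Real.sqrt (a^2 - y^2) + a^2 * Real.arcsin (y/a)) (f' := fun x => 2 * Real.sqrt (a^2 - x^2))
    · apply Continuous.continuousOn
      exact (continuous_id.mul ((continuous_const.sub (continuous_pow 2)).sqrt)).add
        (continuous_const.mul (Real.continuous_arcsin.comp (continuous_id.div_const a)))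
    · intro x hx
      have hxa : x < a := hx.2
      have hxd : d < x := hx.1
      have hxna : -a < x := by linarith
      have hpos : 0 < a^2 - x^2 := by nlinarith
      have hs : 0 < Real.sqrt (a^2 - x^2) := Real.sqrt_pos.2 hpos
      have hs2 : Real.sqrt (a^2 - x^2) ^ 2 = a^2 - x^2 := Real.sq_sqrt hpos.le
      have h1 : HasDerivAt (fun y : ℝ => a^2 - y^2) (-(2*x)) x := by
        simpa using ((hasDerivAt_pow 2 x).const_sub (a^2))
      have h2 : HasDerivAt (fun y : ℝ => Real.sqrt (a^2 - y^2))
          (-(2*x) / (2 * Real.sqrt (a^2 - x^2))) x := by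
        simpa [div_eq_mul_inv, mul_comm, Function.comp_def] using (Real.hasDerivAt_sqrt hpos.ne').comp x h1
      have h3 : HasDerivAt (fun y : ℝ => y * Real.sqrt (a^2 - y^2))
          (1 * Real.sqrt (a^2 - x^2) + x * (-(2*x) / (2 * Real.sqrt (a^2 - x^2)))) x :=
        (hasDerivAt_id x).mul h2
      have hxa1 : x / a < 1 := (div_lt_one ha).2 hxa
      have hxa1' : -1 < x / a := by
        rw [lt_div_iff₀ ha]; linarith
      have h4 : HasDerivAt (fun y : ℝ => Real.arcsin (y/a))
          (1 / Real.sqrt (1 - (x/a)^2) * (1/a)) x := by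
        have := (Real.hasDerivAt_arcsin (ne_of_gt hxa1') (ne_of_lt hxa1)).comp x
          ((hasDerivAt_id x).div_const a)
        simpa [Function.comp_def] using this
      have hsq : Real.sqrt (1 - (x/a)^2) = Real.sqrt (a^2 - x^2) / a := by
        have h9 : 1 - (x/a)^2 = (a^2 - x^2)/a^2 := by field_simp
        rw [h9, Real.sqrt_div hpos.le, Real.sqrt_sq ha.le]
      have h5 : HasDerivAt (fun y : ℝ => y * Real.sqrt (a^2 - y^2) + a^2 * Real.arcsin (y/a))
          (2 * Real.sqrt (a^2 - x^2)) x := by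
        have := h3.add ((h4.const_mul (a^2)))
        refine this.congr_deriv ?_
        symm
        rw [hsq]
        field_simp
        linear_combination hs2
      exact h5.hasDerivWithinAt
    · exact ((continuous_const.mul ((continuous_const.sub (continuous_pow 2)).sqrt)).intervalIntegrable d a)
  simp only at key
  rw [key, div_self ha.ne', Real.arcsin_one]
  simp
  ring

lemma inter_disks_vol (a r : ℝ) (ha : 0 < a) (hr0 : 0 ≤ r) (hr2 : r ≤ 2*a) :
    volume {z : ℝ × ℝ | z.1^2 + z.2^2 ≤ a^2 ∧ (z.1 - r)^2 + z.2^2 ≤ a^2}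
      = ENNReal.ofReal (2*a^2 * Real.arccos (r/(2*a)) - r * Real.sqrt (a^2 - r^2/4)) := by
  set f : ℝ → ℝ := fun x => 2 * Real.sqrt (a^2 - max (x^2) ((x-r)^2)) with hf
  have hS : MeasurableSet {z : ℝ × ℝ | z.1^2 + z.2^2 ≤ a^2 ∧ (z.1 - r)^2 + z.2^2 ≤ a^2} := by
    rw [Set.setOf_and]
    exact (measurableSet_le (by fun_prop) measurable_const).inter
      (measurableSet_le (by fun_prop) measurable_const)
  have slice : ∀ x : ℝ,
      volume (Prod.mk x ⁻¹' {z : ℝ × ℝ | z.1^2 + z.2^2 ≤ a^2 ∧ (z.1 - r)^2 + z.2^2 ≤ a^2})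
        = ENNReal.ofReal (f x) := by
    intro x
    have hset : Prod.mk x ⁻¹' {z : ℝ × ℝ | z.1^2 + z.2^2 ≤ a^2 ∧ (z.1 - r)^2 + z.2^2 ≤ a^2}
        = {y : ℝ | y^2 ≤ a^2 - max (x^2) ((x-r)^2)} := by
      ext y
      simp only [Set.mem_preimage, Set.mem_setOf_eq]
      constructor
      · rintro ⟨h1, h2⟩
        rcases max_cases (x^2) ((x-r)^2) with ⟨hm, _⟩ | ⟨hm, _⟩ <;> rw [hm] <;> linarith
      · intro h
        have h1 := le_max_left (x^2) ((x-r)^2)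
        have h2 := le_max_right (x^2) ((x-r)^2)
        constructor <;> linarith
    rw [hset]
    by_cases hm : 0 ≤ a^2 - max (x^2) ((x-r)^2)
    · have hIcc : {y : ℝ | y^2 ≤ a^2 - max (x^2) ((x-r)^2)}
          = Set.Icc (-(Real.sqrt (a^2 - max (x^2) ((x-r)^2)))) (Real.sqrt (a^2 - max (x^2) ((x-r)^2))) := by
        ext y
        simp only [Set.mem_setOf_eq, Set.mem_Icc]
        constructor
        · intro h
          exact abs_le.1 (Real.abs_le_sqrt h)
        · rintro ⟨h1, h2⟩
          calc y^2 ≤ (Real.sqrt (a^2 - max (x^2) ((x-r)^2)))^2 :=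
                sq_le_sq' h1 h2
            _ = _ := Real.sq_sqrt hm
      rw [hIcc, Real.volume_Icc, hf]
      congr 1
      ring
    · have hempty : {y : ℝ | y^2 ≤ a^2 - max (x^2) ((x-r)^2)} = ∅ := by
        ext y
        simp only [Set.mem_setOf_eq, Set.mem_empty_iff_false, iff_false, not_le]
        nlinarith [sq_nonneg y]
      have h0 : Real.sqrt (a^2 - max (x^2) ((x-r)^2)) = 0 :=
        Real.sqrt_eq_zero'.2 (by linarith)
      rw [hempty, hf]
      simp [h0]
  have hcont : Continuous f := by
    apply continuous_const.mul
    exact (continuous_const.sub ((continuous_pow 2).max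
      ((continuous_id.sub continuous_const).pow 2))).sqrt
  have hzero : ∀ x ∉ Set.Icc (r - a) a, f x = 0 := by
    intro x hx
    rw [Set.mem_Icc, not_and_or] at hx
    have hneg : a^2 - max (x^2) ((x-r)^2) ≤ 0 := by
      rcases hx with hx | hx
      · push_neg at hx
        have h1 := le_max_right (x^2) ((x-r)^2)
        nlinarith
      · push_neg at hx
        have h1 := le_max_left (x^2) ((x-r)^2)
        nlinarith
    rw [hf]
    simp [Real.sqrt_eq_zero'.2 hneg]
  have hint : Integrable f := hcont.integrable_of_hasCompactSupport
    (HasCompactSupport.intro isCompact_Icc hzero)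
  have hnn : 0 ≤ᵐ[volume] f := Filter.Eventually.of_forall fun x => by
    rw [hf]; positivity
  rw [MeasureTheory.Measure.volume_eq_prod, Measure.prod_apply hS]
  simp_rw [slice]
  rw [← MeasureTheory.ofReal_integral_eq_lintegral_ofReal hint hnn]
  congr 1
  rw [← MeasureTheory.setIntegral_eq_integral_of_forall_compl_eq_zero hzero,
    MeasureTheory.integral_Icc_eq_integral_Ioc,
    ← intervalIntegral.integral_of_le (by linarith : r - a ≤ a),
    ← intervalIntegral.integral_add_adjacent_intervals
      (hcont.intervalIntegrable (r-a) (r/2)) (hcont.intervalIntegrable (r/2) a)]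
  have e1 : (∫ x in (r-a)..(r/2), f x) = ∫ x in (r/2)..a, 2 * Real.sqrt (a^2 - x^2) := by
    have hcg : ∀ x ∈ Set.uIcc (r-a) (r/2), f x = (fun u => 2 * Real.sqrt (a^2 - u^2)) (r - x) := by
      intro x hx
      rw [Set.uIcc_of_le (by linarith)] at hx
      have hmax : max (x^2) ((x-r)^2) = (x-r)^2 := max_eq_right (by nlinarith [hx.2])
      rw [hf]
      simp only [hmax]
      congr 2
      ring
    rw [intervalIntegral.integral_congr hcg,
      intervalIntegral.integral_comp_sub_left (fun u => 2 * Real.sqrt (a^2 - u^2)) r]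
    have h1 : r - r/2 = r/2 := by ring
    have h2 : r - (r - a) = a := by ring
    rw [h1, h2]
  have e2 : (∫ x in (r/2)..a, f x) = ∫ x in (r/2)..a, 2 * Real.sqrt (a^2 - x^2) := by
    apply intervalIntegral.integral_congr
    intro x hx
    rw [Set.uIcc_of_le (by linarith)] at hx
    have hmax : max (x^2) ((x-r)^2) = x^2 := max_eq_left (by nlinarith [hx.1])
    rw [hf]
    simp only [hmax]
  rw [e1, e2, ftc_sqrt a (r/2) ha (by linarith) (by linarith)]
  rw [Real.arccos_eq_pi_div_two_sub_arcsin]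
  have hs : Real.sqrt (a^2 - (r/2)^2) = Real.sqrt (a^2 - r^2/4) := by
    congr 1
    ring
  have harg : r/2/a = r/(2*a) := by
    field_simp
  rw [hs, harg]
  ring

lemma vol_ball2 (x : EuclideanSpace ℝ (Fin 2)) (a : ℝ) (ha : 0 ≤ a) :
    volume (Metric.closedBall x a) = ENNReal.ofReal (π * a^2) := by
  rw [EuclideanSpace.volume_closedBall]
  have h2 : ((2:ℕ) : ℝ) / 2 + 1 = 2 := by norm_num
  rw [Fintype.card_fin, h2, Real.Gamma_two, div_one, Real.sq_sqrt pi_nonneg,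
    ← ENNReal.ofReal_pow ha, ← ENNReal.ofReal_mul (by positivity), mul_comm]

theorem stmt_15 (a r : ℝ) (ha : 0 < a)
    (p q : EuclideanSpace ℝ (Fin 2))
    (hdist : dist p q = r) (hr0 : 0 ≤ r) (hr2 : r ≤ 2 * a) :
    volume (Metric.closedBall p a ∪ Metric.closedBall q a)
      = ENNReal.ofReal
          (2 * π * a ^ 2 - 2 * a ^ 2 * Real.arccos (r / (2 * a))
            + r * Real.sqrt (a ^ 2 - r ^ 2 / 4)) := by
  have hvnorm : ‖q - p‖ = r := by
    rw [← hdist, dist_eq_norm, norm_sub_rev]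
  set w : EuclideanSpace ℝ (Fin 2) := EuclideanSpace.single (0 : Fin 2) r with hw
  have hwnorm : ‖w‖ = r := by
    rw [hw, EuclideanSpace.norm_single]
    exact abs_of_nonneg hr0
  set K := (ℝ ∙ (q - p - w))ᗮ with hK
  have he : (Submodule.reflection K) (q - p) = w := Submodule.reflection_sub (by rw [hvnorm, hwnorm])
  set T : EuclideanSpace ℝ (Fin 2) → EuclideanSpace ℝ (Fin 2) :=
    fun x => (Submodule.reflection K) (x - p) with hT
  have hmp : MeasurePreserving T volume volume :=
    ((Submodule.reflection K).measurePreserving).comp (measurePreserving_sub_right volume p)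
  -- reduce the union to canonical position
  have hpre : T ⁻¹' (Metric.closedBall 0 a ∪ Metric.closedBall w a)
      = Metric.closedBall p a ∪ Metric.closedBall q a := by
    ext x
    simp only [Set.mem_preimage, Set.mem_union, Metric.mem_closedBall]
    have h1 : dist (T x) 0 = dist x p := by
      rw [hT, dist_zero_right, LinearIsometryEquiv.norm_map, dist_eq_norm]
    have h2 : dist (T x) w = dist x q := by
      have h3 := LinearIsometryEquiv.dist_map (Submodule.reflection K) (x - p) (q - p)
      rw [he, dist_sub_right] at h3
      exact h3
    rw [h1, h2]
  have hred : volume (Metric.closedBall p a ∪ Metric.closedBall q a)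
      = volume (Metric.closedBall (0 : EuclideanSpace ℝ (Fin 2)) a ∪ Metric.closedBall w a) := by
    rw [← hpre]
    exact hmp.measure_preimage
      ((measurableSet_closedBall.union measurableSet_closedBall).nullMeasurableSet)
  -- the intersection via the planar computation
  have hS : MeasurableSet {z : ℝ × ℝ | z.1^2 + z.2^2 ≤ a^2 ∧ (z.1 - r)^2 + z.2^2 ≤ a^2} := by
    rw [Set.setOf_and]
    exact (measurableSet_le (by fun_prop) measurable_const).inter
      (measurableSet_le (by fun_prop) measurable_const)
  have hφ : MeasurePreserving (fun x : EuclideanSpace ℝ (Fin 2) => (x 0, x 1))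
      volume volume :=
    (volume_preserving_finTwoArrow ℝ).comp
      (EuclideanSpace.volume_preserving_symm_measurableEquiv_toLp (Fin 2))
  have hball : ∀ (z x : EuclideanSpace ℝ (Fin 2)),
      x ∈ Metric.closedBall z a ↔ (x 0 - z 0)^2 + (x 1 - z 1)^2 ≤ a^2 := by
    intro z x
    rw [Metric.mem_closedBall, EuclideanSpace.dist_eq, Fin.sum_univ_two]
    simp only [Real.dist_eq, sq_abs]
    exact Real.sqrt_le_left ha.le
  have hpre2 : (fun x : EuclideanSpace ℝ (Fin 2) => (x 0, x 1)) ⁻¹'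
        {z : ℝ × ℝ | z.1^2 + z.2^2 ≤ a^2 ∧ (z.1 - r)^2 + z.2^2 ≤ a^2}
      = Metric.closedBall 0 a ∩ Metric.closedBall w a := by
    ext x
    simp only [Set.mem_preimage, Set.mem_inter_iff, hball, Set.mem_setOf_eq, hw,
      EuclideanSpace.single_apply]
    norm_num
  have hI : volume (Metric.closedBall (0 : EuclideanSpace ℝ (Fin 2)) a ∩ Metric.closedBall w a)
      = ENNReal.ofReal (2*a^2 * Real.arccos (r/(2*a)) - r * Real.sqrt (a^2 - r^2/4)) := by
    rw [← hpre2, hφ.measure_preimage hS.nullMeasurableSet]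
    exact inter_disks_vol a r ha hr0 hr2
  have hsum := measure_union_add_inter (μ := volume) (Metric.closedBall (0 : EuclideanSpace ℝ (Fin 2)) a)
    (measurableSet_closedBall (x := w) (ε := a))
  rw [hI, vol_ball2 _ _ ha.le, vol_ball2 _ _ ha.le] at hsum
  -- nonnegativity facts
  set t : ℝ := r / (2 * a) with htdef
  have ht0 : 0 ≤ t := by positivity
  have ht1 : t ≤ 1 := by
    rw [htdef, div_le_one (by positivity)]
    linarith
  have hInn : 0 ≤ 2*a^2 * Real.arccos t - r * Real.sqrt (a^2 - r^2/4) := by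
    have hθ0 : 0 ≤ Real.arccos t := Real.arccos_nonneg t
    have hsin : Real.sin (Real.arccos t) = Real.sqrt (1 - t^2) := Real.sin_arccos t
    have hcos : Real.cos (Real.arccos t) = t := Real.cos_arccos (by linarith) ht1
    have h2 : Real.sin (2 * Real.arccos t) ≤ 2 * Real.arccos t :=
      Real.sin_le (by positivity)
    rw [Real.sin_two_mul, hsin, hcos] at h2
    have hrt : r = 2 * a * t := by
      rw [htdef]; field_simp
    have hsq : Real.sqrt (a^2 - r^2/4) = a * Real.sqrt (1 - t^2) := by
      rw [hrt]
      have : (2*a*t)^2/4 = a^2 * t^2 := by ring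
      rw [this, ← Real.sqrt_sq ha.le, ← Real.sqrt_mul (sq_nonneg a)]
      rw [Real.sqrt_sq ha.le]
      congr 1
      ring
    rw [hsq, hrt]
    nlinarith [sq_nonneg a, Real.sqrt_nonneg (1 - t^2)]
  have hUnn : 0 ≤ 2 * π * a ^ 2 - 2 * a ^ 2 * Real.arccos t
      + r * Real.sqrt (a ^ 2 - r ^ 2 / 4) := by
    have hle := Real.arccos_le_pi t
    nlinarith [Real.sqrt_nonneg (a^2 - r^2/4), sq_nonneg a, Real.pi_pos]
  have hkey : volume (Metric.closedBall (0 : EuclideanSpace ℝ (Fin 2)) a ∪ Metric.closedBall w a)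
      + ENNReal.ofReal (2*a^2 * Real.arccos t - r * Real.sqrt (a^2 - r^2/4))
      = ENNReal.ofReal (2 * π * a ^ 2 - 2 * a ^ 2 * Real.arccos t
          + r * Real.sqrt (a ^ 2 - r ^ 2 / 4))
        + ENNReal.ofReal (2*a^2 * Real.arccos t - r * Real.sqrt (a^2 - r^2/4)) := by
    rw [hsum, ← ENNReal.ofReal_add hUnn hInn, ← ENNReal.ofReal_add (by positivity) (by positivity)]
    congr 1
    ring
  rw [hred]
  exact (ENNReal.add_left_inj ENNReal.ofReal_ne_top).1 hkey
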